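/- Let λ₁ and λ₂ be finite Borel measures on compact metric spaces X and Y respectively, let T : X → Z and S : Y → W be measurable maps into measurable spaces Z and W whose σ-algebras are countably generated and contain all singleton sets, and let μ, ν be σ-finite measures on Z, W respectively with T_*λ₁ ≪ μ and S_*λ₂ ≪ ν. Let (λ_t^1) be a (T,μ)-disintegration of λ₁ and (λ_s^2) an (S,ν)-disintegration of λ₂, and let (λ_{t,s}^0) be any (T×S, μ⊗ν)-disintegration of the product measure λ₁ ⊗ λ₂, where T×S : X×Y → Z×W is the map (x,y) ↦ (T(x), S(y)). Then λ_{t,s}^0 = λ_t^1 ⊗ λ_s^2 for (μ⊗ν)-a.e. (t,s). -/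

import Mathlib

open MeasureTheory ENNReal

/-- A `(T, μ)`-disintegration of a measure `ν` on `X`. -/
def IsDisintegration {X Y : Type*} [MeasurableSpace X] [MeasurableSpace Y]
    (ν : Measure X) (T : X → Y) (μ : Measure Y) (lam : Y → Measure X) : Prop :=
  (∀ᵐ t ∂μ, lam t ((T ⁻¹' {t})ᶜ) = 0) ∧
  (∀ f : X → ℝ≥0∞, Measurable f →
      AEMeasurable (fun t => ∫⁻ x, f x ∂(lam t)) μ) ∧
  (∀ f : X → ℝ≥0∞, Measurable f →
      ∫⁻ x, f x ∂ν = ∫⁻ t, ∫⁻ x, f x ∂(lam t) ∂μ)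

/-- `generatePiSystem` of a countable family is countable. -/
lemma countable_generatePiSystem_aux {α : Type*} {S : Set (Set α)} (hS : S.Countable) :
    (generatePiSystem S).Countable := by
  have h : generatePiSystem S ⊆ Set.sInter '' {F | F.Finite ∧ F ⊆ S} := by
    intro s hs
    induction hs with
    | base h =>
      exact ⟨{_}, ⟨Set.finite_singleton _, Set.singleton_subset_iff.2 h⟩, Set.sInter_singleton _⟩
    | inter hs ht hne ihs iht =>
      obtain ⟨F, ⟨hFf, hFS⟩, rfl⟩ := ihs
      obtain ⟨G, ⟨hGf, hGS⟩, rfl⟩ := iht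
      exact ⟨F ∪ G, ⟨hFf.union hGf, Set.union_subset hFS hGS⟩, Set.sInter_union F G⟩
  exact ((Set.countable_setOf_finite_subset hS).image _).mono h

/-- In a countably generated measurable space there is a countable generating π-system
containing `univ`. -/
lemma exists_countable_pisystem {α : Type*} [m : MeasurableSpace α]
    [MeasurableSpace.CountablyGenerated α] :
    ∃ C : Set (Set α), C.Countable ∧ IsPiSystem C ∧ (∀ s ∈ C, MeasurableSet s) ∧
      MeasurableSpace.generateFrom C = m ∧ Set.univ ∈ C := by
  refine ⟨insert Set.univ (generatePiSystem (MeasurableSpace.countableGeneratingSet α)),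
    ((countable_generatePiSystem_aux
      MeasurableSpace.countable_countableGeneratingSet).insert _), ?_, ?_, ?_, Set.mem_insert _ _⟩
  · exact (isPiSystem_generatePiSystem _).insert_univ
  · rintro s (rfl | hs)
    · exact MeasurableSet.univ
    · exact generatePiSystem_measurableSet
        (fun t ht => MeasurableSpace.measurableSet_countableGeneratingSet ht) s hs
  · refine le_antisymm (MeasurableSpace.generateFrom_le ?_) ?_
    · rintro s (rfl | hs)
      · exact MeasurableSet.univ
      · exact generatePiSystem_measurableSet
          (fun t ht => MeasurableSpace.measurableSet_countableGeneratingSet ht) s hs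
    · conv_lhs => rw [← MeasurableSpace.generateFrom_countableGeneratingSet (α := α)]
      exact MeasurableSpace.generateFrom_mono
        ((subset_generatePiSystem_self _).trans (Set.subset_insert _ _))

/-- Key computational lemma: on a measurable rectangle, any disintegration of a product measure
agrees a.e. with the product of the disintegrations. -/
lemma key_rect {X Y Z W : Type*}
    [MeasurableSpace X] [MeasurableSpace Y] [MeasurableSpace Z] [MeasurableSpace W]
    (ν₁ : Measure X) (ν₂ : Measure Y) [IsFiniteMeasure ν₁] [IsFiniteMeasure ν₂]
    (T : X → Z) (hT : Measurable T) (S : Y → W) (hS : Measurable S)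
    (μ : Measure Z) [SigmaFinite μ] (κ : Measure W) [SigmaFinite κ]
    (lam₁ : Z → Measure X) (lam₂ : W → Measure Y) (lam₀ : Z × W → Measure (X × Y))
    (hdis₁ : IsDisintegration ν₁ T μ lam₁)
    (hdis₂ : IsDisintegration ν₂ S κ lam₂)
    (hdis₀ : IsDisintegration (ν₁.prod ν₂) (Prod.map T S) (μ.prod κ) lam₀)
    {U : Set X} {V : Set Y} (hU : MeasurableSet U) (hV : MeasurableSet V) :
    ∀ᵐ p ∂(μ.prod κ), lam₀ p (U ×ˢ V) = lam₁ p.1 U * lam₂ p.2 V := by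
  obtain ⟨hc₁, hm₁, hi₁⟩ := hdis₁
  obtain ⟨hc₂, hm₂, hi₂⟩ := hdis₂
  obtain ⟨hc₀, hm₀, hi₀⟩ := hdis₀
  have aem1 : AEMeasurable (fun t => lam₁ t U) μ := by
    have h := hm₁ (U.indicator 1) (measurable_one.indicator hU)
    simpa only [lintegral_indicator_one hU] using h
  have aem2 : AEMeasurable (fun s => lam₂ s V) κ := by
    have h := hm₂ (V.indicator 1) (measurable_one.indicator hV)
    simpa only [lintegral_indicator_one hV] using h
  have aem0 : AEMeasurable (fun p => lam₀ p (U ×ˢ V)) (μ.prod κ) := by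
    have h := hm₀ ((U ×ˢ V).indicator 1) (measurable_one.indicator (hU.prod hV))
    simpa only [lintegral_indicator_one (hU.prod hV)] using h
  have g1 : AEMeasurable (fun p : Z × W => lam₁ p.1 U) (μ.prod κ) :=
    aem1.comp_quasiMeasurePreserving Measure.quasiMeasurePreserving_fst
  have g2 : AEMeasurable (fun p : Z × W => lam₂ p.2 V) (μ.prod κ) :=
    aem2.comp_quasiMeasurePreserving Measure.quasiMeasurePreserving_snd
  refine ae_eq_of_forall_setLIntegral_eq_of_sigmaFinite₀ aem0 (g1.mul g2) ?_
  intro B hB _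
  set f : X × Y → ℝ≥0∞ :=
    fun z => (U ×ˢ V).indicator 1 z * B.indicator 1 (Prod.map T S z) with hf_def
  have hf : Measurable f :=
    (measurable_one.indicator (hU.prod hV)).mul
      ((measurable_one.indicator hB).comp (hT.prodMap hS))
  -- Left side
  have hL : ∫⁻ p in B, lam₀ p (U ×ˢ V) ∂(μ.prod κ) = ∫⁻ z, f z ∂(ν₁.prod ν₂) := by
    rw [← lintegral_indicator hB, hi₀ f hf]
    refine lintegral_congr_ae ?_
    filter_upwards [hc₀] with p hp
    have hz : ∀ᵐ z ∂(lam₀ p), Prod.map T S z = p := by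
      rw [ae_iff]
      exact hp
    have : ∫⁻ z, f z ∂(lam₀ p)
        = ∫⁻ z, (U ×ˢ V).indicator 1 z * B.indicator 1 p ∂(lam₀ p) := by
      refine lintegral_congr_ae ?_
      filter_upwards [hz] with z hz
      simp only [hf_def, hz]
    rw [this, lintegral_mul_const _ (measurable_one.indicator (hU.prod hV)),
      lintegral_indicator_one (hU.prod hV)]
    by_cases hpB : p ∈ B <;> simp [hpB]
  -- Right side
  have hR : ∫⁻ z, f z ∂(ν₁.prod ν₂)
      = ∫⁻ p in B, lam₁ p.1 U * lam₂ p.2 V ∂(μ.prod κ) := by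
    have hindU : ∀ x, U.indicator (1 : X → ℝ≥0∞) x ≠ ∞ := by
      intro x; by_cases h : x ∈ U <;> simp [h]
    -- Step A: Tonelli
    rw [lintegral_prod f hf.aemeasurable]
    -- Step B: inner integral via disintegration of ν₂
    have stepB : ∀ x, ∫⁻ y, f (x, y) ∂ν₂
        = ∫⁻ s, U.indicator 1 x * (lam₂ s V * B.indicator 1 (T x, s)) ∂κ := by
      intro x
      have hgx : Measurable fun y => V.indicator (1 : Y → ℝ≥0∞) y * B.indicator 1 (T x, S y) :=
        (measurable_one.indicator hV).mul
          ((measurable_one.indicator hB).comp (measurable_const.prodMk hS))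
      have h1 : ∫⁻ y, f (x, y) ∂ν₂
          = ∫⁻ y, U.indicator 1 x * (V.indicator 1 y * B.indicator 1 (T x, S y)) ∂ν₂ := by
        refine lintegral_congr fun y => ?_
        rw [hf_def]
        simp only [Set.indicator_prod_one, Prod.map_apply]
        ring
      rw [h1, lintegral_const_mul' _ _ (hindU x), hi₂ _ hgx,
        lintegral_const_mul' _ _ (hindU x)]
      congr 1
      refine lintegral_congr_ae ?_
      filter_upwards [hc₂] with s hs
      have hy : ∀ᵐ y ∂(lam₂ s), S y = s := by rw [ae_iff]; exact hs
      have : ∫⁻ y, V.indicator 1 y * B.indicator 1 (T x, S y) ∂(lam₂ s)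
          = ∫⁻ y, V.indicator 1 y * B.indicator 1 (T x, s) ∂(lam₂ s) := by
        refine lintegral_congr_ae ?_
        filter_upwards [hy] with y hy
        rw [hy]
      rw [this, lintegral_mul_const _ (measurable_one.indicator hV), lintegral_indicator_one hV]
    simp_rw [stepB]
    -- Step C: swap ν₁ and κ
    have hF : AEMeasurable
        (Function.uncurry fun x s => U.indicator (1 : X → ℝ≥0∞) x *
          (lam₂ s V * B.indicator 1 (T x, s))) (ν₁.prod κ) := by
      refine AEMeasurable.mul ?_ (AEMeasurable.mul ?_ ?_)
      · exact ((measurable_one.indicator hU).comp measurable_fst).aemeasurable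
      · exact aem2.comp_quasiMeasurePreserving Measure.quasiMeasurePreserving_snd
      · exact ((measurable_one.indicator hB).comp
          ((hT.comp measurable_fst).prodMk measurable_snd)).aemeasurable
    rw [lintegral_lintegral_swap hF]
    -- Step D: for every s, compute the inner ν₁ integral via disintegration of ν₁
    have stepD : ∀ s, ∫⁻ x, U.indicator 1 x * (lam₂ s V * B.indicator 1 (T x, s)) ∂ν₁
        = ∫⁻ t, lam₂ s V * (lam₁ t U * B.indicator 1 (t, s)) ∂μ := by
      intro s
      have hhx : Measurable fun x => U.indicator (1 : X → ℝ≥0∞) x * B.indicator 1 (T x, s) :=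
        (measurable_one.indicator hU).mul
          ((measurable_one.indicator hB).comp (hT.prodMk measurable_const))
      have h1 : ∫⁻ x, U.indicator 1 x * (lam₂ s V * B.indicator 1 (T x, s)) ∂ν₁
          = ∫⁻ x, lam₂ s V * (U.indicator 1 x * B.indicator 1 (T x, s)) ∂ν₁ := by
        refine lintegral_congr fun x => ?_; ring
      rw [h1, lintegral_const_mul'' _ hhx.aemeasurable, hi₁ _ hhx]
      have h2 : ∫⁻ t, ∫⁻ x, U.indicator 1 x * B.indicator 1 (T x, s) ∂(lam₁ t) ∂μ
          = ∫⁻ t, lam₁ t U * B.indicator 1 (t, s) ∂μ := by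
        refine lintegral_congr_ae ?_
        filter_upwards [hc₁] with t ht
        have hx : ∀ᵐ x ∂(lam₁ t), T x = t := by rw [ae_iff]; exact ht
        have : ∫⁻ x, U.indicator 1 x * B.indicator 1 (T x, s) ∂(lam₁ t)
            = ∫⁻ x, U.indicator 1 x * B.indicator 1 (t, s) ∂(lam₁ t) := by
          refine lintegral_congr_ae ?_
          filter_upwards [hx] with x hx
          rw [hx]
        rw [this, lintegral_mul_const _ (measurable_one.indicator hU),
          lintegral_indicator_one hU]
      rw [h2]
      have haemt : AEMeasurable (fun t => lam₁ t U * B.indicator 1 (t, s)) μ :=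
        aem1.mul (((measurable_one.indicator hB).comp
          (measurable_id.prodMk measurable_const)).aemeasurable)
      exact (lintegral_const_mul'' _ haemt).symm
    simp_rw [stepD]
    -- Step E: swap κ and μ
    have hG : AEMeasurable
        (Function.uncurry fun s t => lam₂ s V * (lam₁ t U * B.indicator 1 (t, s)))
        (κ.prod μ) := by
      refine AEMeasurable.mul ?_ (AEMeasurable.mul ?_ ?_)
      · exact aem2.comp_quasiMeasurePreserving Measure.quasiMeasurePreserving_fst
      · exact aem1.comp_quasiMeasurePreserving Measure.quasiMeasurePreserving_snd
      · exact ((measurable_one.indicator hB).comp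
          (measurable_snd.prodMk measurable_fst)).aemeasurable
    rw [lintegral_lintegral_swap hG]
    -- Step F: back to a set integral over B
    rw [← lintegral_indicator hB,
      lintegral_prod (B.indicator fun p : Z × W => lam₁ p.1 U * lam₂ p.2 V)
        ((g1.mul g2).indicator hB)]
    refine lintegral_congr fun t => lintegral_congr fun s => ?_
    by_cases h : (t, s) ∈ B <;>
      simp [h, Set.indicator_of_mem, Set.indicator_of_notMem, mul_comm, mul_assoc, mul_left_comm]
  rw [hL, hR]

theorem disintegration_prod
    {X Y Z W : Type*}
    [MetricSpace X] [CompactSpace X] [MeasurableSpace X] [BorelSpace X]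
    [MetricSpace Y] [CompactSpace Y] [MeasurableSpace Y] [BorelSpace Y]
    [MeasurableSpace Z] [MeasurableSpace.CountablyGenerated Z] [MeasurableSingletonClass Z]
    [MeasurableSpace W] [MeasurableSpace.CountablyGenerated W] [MeasurableSingletonClass W]
    (ν₁ : Measure X) (ν₂ : Measure Y) [IsFiniteMeasure ν₁] [IsFiniteMeasure ν₂]
    (T : X → Z) (hT : Measurable T) (S : Y → W) (hS : Measurable S)
    (μ : Measure Z) [SigmaFinite μ] (κ : Measure W) [SigmaFinite κ]
    (habs₁ : ν₁.map T ≪ μ) (habs₂ : ν₂.map S ≪ κ)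
    (lam₁ : Z → Measure X) (lam₂ : W → Measure Y)
    (lam₀ : Z × W → Measure (X × Y))
    (hdis₁ : IsDisintegration ν₁ T μ lam₁)
    (hdis₂ : IsDisintegration ν₂ S κ lam₂)
    (hdis₀ : IsDisintegration (ν₁.prod ν₂) (Prod.map T S) (μ.prod κ) lam₀) :
    ∀ᵐ p ∂(μ.prod κ), lam₀ p = (lam₁ p.1).prod (lam₂ p.2) := by
  obtain ⟨C, hCc, hCpi, hCm, hCgen, hCuniv⟩ := exists_countable_pisystem (α := X)
  obtain ⟨D, hDc, hDpi, hDm, hDgen, hDuniv⟩ := exists_countable_pisystem (α := Y)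
  -- a.e. finiteness
  have hfin0 : ∀ᵐ p ∂(μ.prod κ), lam₀ p Set.univ < ∞ := by
    have haem : AEMeasurable (fun p => lam₀ p Set.univ) (μ.prod κ) := by
      have h := hdis₀.2.1 1 measurable_one
      simpa only [Pi.one_apply, lintegral_one] using h
    refine ae_lt_top' haem ?_
    have h := hdis₀.2.2 1 measurable_one
    simp only [Pi.one_apply, lintegral_one] at h
    rw [← h]
    exact measure_ne_top _ _
  have hfin1' : ∀ᵐ t ∂μ, lam₁ t Set.univ < ∞ := by
    have haem : AEMeasurable (fun t => lam₁ t Set.univ) μ := by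
      have h := hdis₁.2.1 1 measurable_one
      simpa only [Pi.one_apply, lintegral_one] using h
    refine ae_lt_top' haem ?_
    have h := hdis₁.2.2 1 measurable_one
    simp only [Pi.one_apply, lintegral_one] at h
    rw [← h]
    exact measure_ne_top _ _
  have hfin2' : ∀ᵐ s ∂κ, lam₂ s Set.univ < ∞ := by
    have haem : AEMeasurable (fun s => lam₂ s Set.univ) κ := by
      have h := hdis₂.2.1 1 measurable_one
      simpa only [Pi.one_apply, lintegral_one] using h
    refine ae_lt_top' haem ?_
    have h := hdis₂.2.2 1 measurable_one
    simp only [Pi.one_apply, lintegral_one] at h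
    rw [← h]
    exact measure_ne_top _ _
  have hfin1 : ∀ᵐ p ∂(μ.prod κ), lam₁ (Prod.fst p) Set.univ < ∞ :=
    Measure.quasiMeasurePreserving_fst.tendsto_ae.eventually hfin1'
  have hfin2 : ∀ᵐ p ∂(μ.prod κ), lam₂ (Prod.snd p) Set.univ < ∞ :=
    Measure.quasiMeasurePreserving_snd.tendsto_ae.eventually hfin2'
  -- agreement on all rectangles from the countable π-systems
  have key : ∀ᵐ p ∂(μ.prod κ), ∀ U ∈ C, ∀ V ∈ D, lam₀ p (U ×ˢ V) = lam₁ p.1 U * lam₂ p.2 V := by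
    rw [ae_ball_iff hCc]
    intro U hU
    rw [ae_ball_iff hDc]
    intro V hV
    exact key_rect ν₁ ν₂ T hT S hS μ κ lam₁ lam₂ lam₀ hdis₁ hdis₂ hdis₀ (hCm U hU) (hDm V hV)
  filter_upwards [key, hfin0, hfin1, hfin2] with p hkey hf0 hf1 hf2
  haveI : IsFiniteMeasure (lam₀ p) := ⟨hf0⟩
  haveI : IsFiniteMeasure (lam₁ p.1) := ⟨hf1⟩
  haveI : IsFiniteMeasure (lam₂ p.2) := ⟨hf2⟩
  have hCspan : IsCountablySpanning C := ⟨fun _ => Set.univ, fun _ => hCuniv, Set.iUnion_const _⟩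
  have hDspan : IsCountablySpanning D := ⟨fun _ => Set.univ, fun _ => hDuniv, Set.iUnion_const _⟩
  have hgen : (inferInstance : MeasurableSpace (X × Y))
      = MeasurableSpace.generateFrom (Set.image2 (· ×ˢ ·) C D) := by
    rw [← generateFrom_prod_eq hCspan hDspan, hCgen, hDgen]
  refine MeasureTheory.ext_of_generate_finite _ hgen (hCpi.prod hDpi) ?_ ?_
  · rintro _ ⟨U, hU, V, hV, rfl⟩
    rw [Measure.prod_prod]
    exact hkey U hU V hV
  · rw [← Set.univ_prod_univ, Measure.prod_prod]
    exact hkey _ hCuniv _ hDuniv
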